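/- arXiv:1712.03068 — 8 statements merged into one kernel-verified Lean document; each statement's English description precedes it below -/
import Mathlib

section
/- Let A be a commutative ring, let X and Y be derivations of A, and let P, Q ∈ A satisfy X(Y(f)) − Y(X(f)) = P·X(f) + Q·Y(f) for all f ∈ A. Let A₀, B₀, C₀ ∈ A and suppose θ ∈ A satisfies X(Y(θ)) + A₀·X(θ) + B₀·Y(θ) + C₀·θ = 0. Assume the Laplace invariant H₀ := X(A₀) + A₀·B₀ − C₀ is a unit of A with inverse H₀⁻¹. Then the Laplace transform η₁ := Y(θ) + A₀·θ satisfies an equation of the same form, X(Y(η₁)) + A₁·X(η₁) + B₁·Y(η₁) + C₁·η₁ = 0, where A₁ = A₀ − H₀⁻¹·Y(H₀) − P, B₁ = B₀ − Q, and C₁ = C₀ − X(A₀) − H₀⁻¹·Y(H₀)·B₀ + Y(B₀). -/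
/-- The generalized (Y-)Laplace transformation: if `θ` solves the linearized hyperbolic
equation with coefficients `A₀, B₀, C₀` and the Laplace invariant `H₀ = X A₀ + A₀ B₀ - C₀`
is a unit, then `η₁ = Y θ + A₀ θ` solves an equation of the same form with the
transformed coefficients. -/
theorem laplace_transform_Y
    {A : Type*} [CommRing A] (X Y : Derivation ℤ A A) (P Q : A)
    (hcomm : ∀ f : A, X (Y f) - Y (X f) = P * X f + Q * Y f)
    (A₀ B₀ C₀ θ : A)
    (hθ : X (Y θ) + A₀ * X θ + B₀ * Y θ + C₀ * θ = 0)
    (H₀ H₀inv : A) (hH₀ : H₀ = X A₀ + A₀ * B₀ - C₀)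
    (hinv : H₀ * H₀inv = 1) :
    X (Y (Y θ + A₀ * θ))
      + (A₀ - H₀inv * Y H₀ - P) * X (Y θ + A₀ * θ)
      + (B₀ - Q) * Y (Y θ + A₀ * θ)
      + (C₀ - X A₀ - H₀inv * Y H₀ * B₀ + Y B₀) * (Y θ + A₀ * θ) = 0 := by
  subst hH₀
  have hY : Y (X (Y θ) + A₀ * X θ + B₀ * Y θ + C₀ * θ) = 0 := by rw [hθ]; simp
  simp only [map_add, map_sub, Derivation.leibniz, smul_eq_mul] at hY ⊢
  linear_combination hcomm (Y θ) + hY + A₀ * hcomm θ + θ * hcomm A₀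
    + (A₀ - H₀inv * (Y (X A₀) + (Y A₀ * B₀ + A₀ * Y B₀) - Y C₀)) * hθ
    - θ * (Y (X A₀) + (Y A₀ * B₀ + A₀ * Y B₀) - Y C₀) * hinv
end

section
/- Let A be a commutative ring, let X and Y be derivations of A, and let P, Q ∈ A satisfy X(Y(f)) − Y(X(f)) = P·X(f) + Q·Y(f) for all f ∈ A. Let D₀, E₀, G₀ ∈ A and suppose θ ∈ A satisfies Y(X(θ)) + D₀·X(θ) + E₀·Y(θ) + G₀·θ = 0. Assume K₀ := Y(E₀) + E₀·D₀ − G₀ is a unit of A with inverse K₀⁻¹. Then ξ := X(θ) + E₀·θ satisfies Y(X(ξ)) + D₁·X(ξ) + E₁·Y(ξ) + G₁·ξ = 0, where D₁ = D₀ + P, E₁ = E₀ − K₀⁻¹·X(K₀) + Q, and G₁ = G₀ − Y(E₀) − D₀·K₀⁻¹·X(K₀) + X(D₀). -/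
/-- The X-Laplace transformation: if `θ` solves the reordered linearized hyperbolic equation
with coefficients `D₀, E₀, G₀` and `K₀ = Y E₀ + E₀ D₀ - G₀` is a unit, then
`ξ = X θ + E₀ θ` solves an equation of the same form with the transformed coefficients. -/
theorem laplace_transform_X
    {A : Type*} [CommRing A] (X Y : Derivation ℤ A A) (P Q : A)
    (hcomm : ∀ f : A, X (Y f) - Y (X f) = P * X f + Q * Y f)
    (D₀ E₀ G₀ θ : A)
    (hθ : Y (X θ) + D₀ * X θ + E₀ * Y θ + G₀ * θ = 0)
    (K₀ K₀inv : A) (hK₀ : K₀ = Y E₀ + E₀ * D₀ - G₀)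
    (hinv : K₀ * K₀inv = 1) :
    Y (X (X θ + E₀ * θ))
      + (D₀ + P) * X (X θ + E₀ * θ)
      + (E₀ - K₀inv * X K₀ + Q) * Y (X θ + E₀ * θ)
      + (G₀ - Y E₀ - D₀ * (K₀inv * X K₀) + X D₀) * (X θ + E₀ * θ) = 0 := by
  have e2 : X (Y (X θ)) + (X D₀ * X θ + D₀ * X (X θ)) + (X E₀ * Y θ + E₀ * X (Y θ))
      + (X G₀ * θ + G₀ * X θ) = 0 := by
    have h := congrArg X hθ
    simp only [map_add, Derivation.leibniz, smul_eq_mul, map_zero] at h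
    linear_combination h
  have e7 : X K₀ = X (Y E₀) + (X E₀ * D₀ + E₀ * X D₀) - X G₀ := by
    have h := congrArg X hK₀
    simp only [map_add, map_sub, Derivation.leibniz, smul_eq_mul] at h
    linear_combination h
  have e3 := hcomm θ
  have e4 := hcomm (X θ)
  have e5 := hcomm E₀
  simp only [map_add, Derivation.leibniz, smul_eq_mul]
  linear_combination (E₀ - K₀inv * X K₀) * hθ + e2 - E₀ * e3 - e4 - θ * e5
    + (K₀inv * θ * X (Y E₀) + D₀ * K₀inv * θ * X E₀ + E₀ * K₀inv * θ * X D₀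
        - K₀inv * θ * X G₀) * hK₀
    + (-(K₀inv * θ * Y E₀) - D₀ * E₀ * K₀inv * θ + G₀ * K₀inv * θ) * e7
    + (-(θ * X (Y E₀)) - D₀ * θ * X E₀ - E₀ * θ * X D₀ + θ * X G₀) * hinv
end

section
/- Let A be a commutative ring, let X and Y be derivations of A, and let a, b, c ∈ A. Suppose θ ∈ A satisfies X(Y(θ)) + a·X(θ) + b·Y(θ) + c·θ = 0. Set η := Y(θ) + a·θ and h := X(a) + a·b − c. Then X(η) + b·η = h·θ. In particular, if h is a unit of A, then θ = h⁻¹·(X(η) + b·η); that is, the Laplace transformation θ ↦ Y(θ) + a·θ is inverted by η ↦ h⁻¹·(X(η) + b·η). -/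
/-- The first-order descent relation `X η + b η = h θ` for the Laplace transform
`η = Y θ + a θ`, and the inverse Laplace transform when the Laplace invariant `h` is a unit. -/
theorem laplace_transform_inverse
    {A : Type*} [CommRing A] (X Y : Derivation ℤ A A) (a b c θ : A)
    (hθ : X (Y θ) + a * X θ + b * Y θ + c * θ = 0) :
    X (Y θ + a * θ) + b * (Y θ + a * θ) = (X a + a * b - c) * θ ∧
    ∀ hinv : A, (X a + a * b - c) * hinv = 1 →
      θ = hinv * (X (Y θ + a * θ) + b * (Y θ + a * θ)) := by
  have key : X (Y θ + a * θ) + b * (Y θ + a * θ) = (X a + a * b - c) * θ := by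
    rw [map_add, Derivation.leibniz, smul_eq_mul, smul_eq_mul]
    linear_combination hθ
  refine ⟨key, fun hinv hh => ?_⟩
  rw [key]
  linear_combination (-θ) * hh
end

section
/- Let A be a commutative ring, let X and Y be derivations of A, let a, b, c ∈ A, and let μ be a unit of A with inverse μ⁻¹. Suppose θ ∈ A satisfies X(Y(θ)) + a·X(θ) + b·Y(θ) + c·θ = 0. Set Θ := μ·θ, and define A₀ = a − μ⁻¹·Y(μ), B₀ = b − μ⁻¹·X(μ), C₀ = c − μ⁻¹·X(Y(μ)) − a·μ⁻¹·X(μ) − b·μ⁻¹·Y(μ) + 2·μ⁻²·X(μ)·Y(μ). Then X(Y(Θ)) + A₀·X(Θ) + B₀·Y(Θ) + C₀·Θ = 0. -/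
/-- Rescaling covariance of the universal linearization: if `θ` solves the linearized
hyperbolic equation and `μ` is a unit, then `Θ = μ·θ` solves the equation with the
rescaled coefficients `A₀, B₀, C₀`. -/
theorem linearization_rescaling
    {A : Type*} [CommRing A] (X Y : Derivation ℤ A A) (a b c θ μ μinv : A)
    (hμ : μ * μinv = 1)
    (hθ : X (Y θ) + a * X θ + b * Y θ + c * θ = 0)
    (A₀ B₀ C₀ : A)
    (hA₀ : A₀ = a - μinv * Y μ)
    (hB₀ : B₀ = b - μinv * X μ)
    (hC₀ : C₀ = c - μinv * X (Y μ) - a * (μinv * X μ) - b * (μinv * Y μ)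
        + 2 * (μinv * μinv) * X μ * Y μ) :
    X (Y (μ * θ)) + A₀ * X (μ * θ) + B₀ * Y (μ * θ) + C₀ * (μ * θ) = 0 := by
  subst hA₀ hB₀ hC₀
  simp only [Derivation.leibniz, smul_eq_mul, map_add]
  linear_combination μ * hθ -
    (Y μ * X θ + X μ * Y θ + X (Y μ) * θ + a * X μ * θ + b * Y μ * θ
      - 2 * μinv * X μ * Y μ * θ) * hμ
end

section
/- Let A be a commutative ring, let X and Y be derivations of A, let a, b, c ∈ A, and let μ be a unit of A with inverse μ⁻¹. Define the rescaled coefficients A₀ = a − μ⁻¹·Y(μ), B₀ = b − μ⁻¹·X(μ), C₀ = c − μ⁻¹·X(Y(μ)) − a·μ⁻¹·X(μ) − b·μ⁻¹·Y(μ) + 2·μ⁻²·X(μ)·Y(μ). Then the Laplace invariant is unchanged by the rescaling: X(A₀) + A₀·B₀ − C₀ = X(a) + a·b − c. Moreover, for any further coefficient a' ∈ A with rescaling A₀' = a' − μ⁻¹·Y(μ), one has A₀' − A₀ = a' − a, so differences of first coefficients (the invariants H_{ijk}) are also unchanged. -/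
/-- The Laplace invariant `X a + a b - c` is unchanged under rescaling of the contact
form by a unit `μ`; moreover differences of first coefficients (the invariants `H_{ijk}`)
are also unchanged. -/
theorem laplace_invariant_rescaling_invariance
    {A : Type*} [CommRing A] (X Y : Derivation ℤ A A) (a b c μ μinv : A)
    (hμ : μ * μinv = 1)
    (A₀ B₀ C₀ : A)
    (hA₀ : A₀ = a - μinv * Y μ)
    (hB₀ : B₀ = b - μinv * X μ)
    (hC₀ : C₀ = c - μinv * X (Y μ) - a * (μinv * X μ) - b * (μinv * Y μ)
        + 2 * (μinv * μinv) * X μ * Y μ) :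
    X A₀ + A₀ * B₀ - C₀ = X a + a * b - c ∧
    ∀ a' : A, (a' - μinv * Y μ) - A₀ = a' - a := by
  have h0 : X (μ * μinv) = 0 := by rw [hμ]; simp
  rw [Derivation.leibniz] at h0
  have hXinv : X μinv = -(μinv * μinv * X μ) := by
    simp only [smul_eq_mul] at h0
    linear_combination μinv * h0 - X μinv * hμ
  constructor
  · subst hA₀ hB₀ hC₀
    rw [map_sub, Derivation.leibniz, hXinv]
    simp only [smul_eq_mul]
    ring
  · intro a'; rw [hA₀]; ring
end

section
/- Let A be a commutative ring and let X and Y be commuting derivations of A, i.e. X(Y(f)) = Y(X(f)) for all f ∈ A. Let a, b, c ∈ A, set h := X(a) + a·b − c, and define L*(ρ) = X(Y(ρ)) − a·X(ρ) − b·Y(ρ) + (c − X(a) − Y(b))·ρ. Then for every ρ ∈ A, L*(ρ) = Y(X(ρ) − b·ρ) − a·(X(ρ) − b·ρ) − h·ρ. Consequently L*(ρ) = 0 if and only if ψ := X(ρ) − b·ρ satisfies Y(ψ) = h·ρ + a·ψ; i.e., the adjoint equation is equivalent to the first-order system X(ρ) = b·ρ + ψ, Y(ψ) = h·ρ + a·ψ.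 -/
/-- The adjoint equation `L*(ρ) = 0` rewritten as a first-order system: with
`h = X a + a b - c` the Laplace invariant, `L*(ρ) = Y(X ρ - b ρ) - a·(X ρ - b ρ) - h·ρ`,
so `L*(ρ) = 0` iff `ψ = X ρ - b ρ` satisfies `Y ψ = h ρ + a ψ`. -/
theorem adjoint_first_order_system
    {A : Type*} [CommRing A] (X Y : Derivation ℤ A A)
    (hcomm : ∀ f : A, X (Y f) = Y (X f))
    (a b c h : A) (hh : h = X a + a * b - c) :
    (∀ ρ : A, X (Y ρ) - a * X ρ - b * Y ρ + (c - X a - Y b) * ρ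
        = Y (X ρ - b * ρ) - a * (X ρ - b * ρ) - h * ρ) ∧
    (∀ ρ : A, (X (Y ρ) - a * X ρ - b * Y ρ + (c - X a - Y b) * ρ = 0 ↔
        Y (X ρ - b * ρ) = h * ρ + a * (X ρ - b * ρ))) := by
  have key : ∀ ρ : A, X (Y ρ) - a * X ρ - b * Y ρ + (c - X a - Y b) * ρ
      = Y (X ρ - b * ρ) - a * (X ρ - b * ρ) - h * ρ := by
    intro ρ
    rw [map_sub, Derivation.leibniz, hh, hcomm]; simp only [smul_eq_mul]
    ring
  refine ⟨key, fun ρ => ?_⟩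
  rw [key, sub_eq_zero]
  constructor <;> intro hx <;> linear_combination hx
end

section
/- Let A be a commutative ring and let X and Z be derivations of A such that there exist p, q ∈ A with X(Z(f)) − Z(X(f)) = p·X(f) + q·Z(f) for all f ∈ A. Suppose I, K ∈ A satisfy X(I) = 0 and Z(K) = 0, and that X(K) and Z(I) are units of A. Then the rescaled derivations X̃ := (X(K))⁻¹·X and Z̃ := (Z(I))⁻¹·Z commute: X̃(Z̃(f)) = Z̃(X̃(f)) for all f ∈ A. -/
/-- Rescaling characteristic vector fields to commute: if `[X,Z] = p·X + q·Z`,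
`X I = 0`, `Z K = 0`, and `X K`, `Z I` are units with inverses `Kinv`, `Iinv`, then
the rescaled derivations `X̃ = Kinv·X` and `Z̃ = Iinv·Z` commute. -/
theorem rescaled_characteristics_commute
    {A : Type*} [CommRing A] (X Z : Derivation ℤ A A)
    (p q : A) (hcomm : ∀ f : A, X (Z f) - Z (X f) = p * X f + q * Z f)
    (I K : A) (hI : X I = 0) (hK : Z K = 0)
    (Kinv Iinv : A) (hKinv : X K * Kinv = 1) (hIinv : Z I * Iinv = 1) :
    ∀ f : A, Kinv * X (Iinv * Z f) = Iinv * Z (Kinv * X f) := by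
  -- X (Z I) = q * Z I  (from commutator relation at I, using X I = 0)
  have hXZI : X (Z I) = q * Z I := by
    have h := hcomm I
    rw [hI, map_zero] at h
    linear_combination h
  -- Z (X K) = -(p * X K)
  have hZXK : Z (X K) = -(p * X K) := by
    have h := hcomm K
    rw [hK, map_zero] at h
    linear_combination -h
  -- derivative of the inverses
  have e1 : Z I * X Iinv + Iinv * X (Z I) = 0 := by
    have h := congrArg X hIinv
    rw [X.leibniz] at h
    simpa [smul_eq_mul, mul_comm, X.map_one_eq_zero, Z.map_one_eq_zero] using h
  have e2 : X K * Z Kinv + Kinv * Z (X K) = 0 := by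
    have h := congrArg Z hKinv
    rw [Z.leibniz] at h
    simpa [smul_eq_mul, mul_comm, X.map_one_eq_zero, Z.map_one_eq_zero] using h
  have hXIinv : X Iinv = -(q * Iinv) := by
    linear_combination Iinv * e1 - Iinv * Iinv * hXZI + (-(X Iinv) - q * Iinv) * hIinv
  have hZKinv : Z Kinv = p * Kinv := by
    linear_combination Kinv * e2 - Kinv * Kinv * hZXK + (-(Z Kinv) + p * Kinv) * hKinv
  intro f
  rw [X.leibniz, Z.leibniz]
  simp only [smul_eq_mul]
  rw [hXIinv, hZKinv]
  linear_combination Kinv * Iinv * hcomm f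
end

section
/- For real numbers u, u₁, u₂, u₃ with u ≠ 0 and u ≠ −1, set f₁₂ = (2u+1)·u₁·u₂/(u·(u+1)), f₁₃ = u₁·u₃/(u+1), f₂₃ = u₂·u₃/u. Then the total-derivative compatibility conditions of the system u₁₂ = f₁₂, u₁₃ = f₁₃, u₂₃ = f₂₃ hold identically: u₃·∂f₁₂/∂u + f₁₃·∂f₁₂/∂u₁ + f₂₃·∂f₁₂/∂u₂ = u₂·∂f₁₃/∂u + f₁₂·∂f₁₃/∂u₁ + f₂₃·∂f₁₃/∂u₃ = u₁·∂f₂₃/∂u + f₁₂·∂f₂₃/∂u₂ + f₁₃·∂f₂₃/∂u₃, and each of these three expressions equals 2·u₁·u₂·u₃/(u·(u+1)). (Here ∂/∂u, ∂/∂u₁, ∂/∂u₂, ∂/∂u₃ denote partial derivatives of the explicit rational functions f₁₂, f₁₃, f₂₃ with respect to the indicated variable, the other variables held fixed.) -/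
/-- The total-derivative compatibility (involutivity) conditions of Vassiliou's system
`u₁₂ = (2u+1)u₁u₂/(u(u+1))`, `u₁₃ = u₁u₃/(u+1)`, `u₂₃ = u₂u₃/u` hold identically,
and each of the three cross total derivatives equals `2u₁u₂u₃/(u(u+1))`. -/
theorem vassiliou_system_involutive
    (u u₁ u₂ u₃ : ℝ) (hu : u ≠ 0) (hu1 : u ≠ -1)
    (f₁₂ f₁₃ f₂₃ : ℝ)
    (hf₁₂ : f₁₂ = (2 * u + 1) * u₁ * u₂ / (u * (u + 1)))
    (hf₁₃ : f₁₃ = u₁ * u₃ / (u + 1))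
    (hf₂₃ : f₂₃ = u₂ * u₃ / u)
    (D₃f₁₂ D₂f₁₃ D₁f₂₃ : ℝ)
    (hD₃f₁₂ : D₃f₁₂ =
      u₃ * deriv (fun t => (2 * t + 1) * u₁ * u₂ / (t * (t + 1))) u
      + f₁₃ * deriv (fun t => (2 * u + 1) * t * u₂ / (u * (u + 1))) u₁
      + f₂₃ * deriv (fun t => (2 * u + 1) * u₁ * t / (u * (u + 1))) u₂)
    (hD₂f₁₃ : D₂f₁₃ =
      u₂ * deriv (fun t => u₁ * u₃ / (t + 1)) u
      + f₁₂ * deriv (fun t => t * u₃ / (u + 1)) u₁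
      + f₂₃ * deriv (fun t => u₁ * t / (u + 1)) u₃)
    (hD₁f₂₃ : D₁f₂₃ =
      u₁ * deriv (fun t => u₂ * u₃ / t) u
      + f₁₂ * deriv (fun t => t * u₃ / u) u₂
      + f₁₃ * deriv (fun t => u₂ * t / u) u₃) :
    D₃f₁₂ = D₂f₁₃ ∧ D₂f₁₃ = D₁f₂₃ ∧
    D₃f₁₂ = 2 * u₁ * u₂ * u₃ / (u * (u + 1)) := by

  have hu1' : u + 1 ≠ 0 := by intro h; apply hu1; linarith
  have hden : u * (u + 1) ≠ 0 := mul_ne_zero hu hu1'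
  have h1 : deriv (fun t => (2 * t + 1) * u₁ * u₂ / (t * (t + 1))) u =
      ((2 * 1 + 0) * u₁ * u₂ * (u * (u + 1)) - (2 * u + 1) * u₁ * u₂ * (1 * (u + 1) + u * 1)) / (u * (u + 1)) ^ 2 := by
    simpa [Pi.div_def, Pi.mul_def] using (((((hasDerivAt_id u).const_mul 2).add_const 1).mul_const u₁).mul_const u₂ |>.div
      ((hasDerivAt_id u).mul ((hasDerivAt_id u).add_const 1)) hden).deriv
  have h2 : deriv (fun t => (2 * u + 1) * t * u₂ / (u * (u + 1))) u₁ =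
      (2 * u + 1) * 1 * u₂ / (u * (u + 1)) := by
    simpa using ((((hasDerivAt_id u₁).const_mul (2 * u + 1)).mul_const u₂).div_const _).deriv
  have h3 : deriv (fun t => (2 * u + 1) * u₁ * t / (u * (u + 1))) u₂ =
      (2 * u + 1) * u₁ * 1 / (u * (u + 1)) := by
    simpa using (((hasDerivAt_id u₂).const_mul ((2 * u + 1) * u₁)).div_const _).deriv
  have h4 : deriv (fun t => u₁ * u₃ / (t + 1)) u =
      (0 * (u + 1) - u₁ * u₃ * 1) / (u + 1) ^ 2 := by
    simpa [Pi.div_def, Pi.mul_def] using ((hasDerivAt_const u (u₁ * u₃)).div ((hasDerivAt_id u).add_const 1) hu1').deriv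
  have h5 : deriv (fun t => t * u₃ / (u + 1)) u₁ = 1 * u₃ / (u + 1) := by
    simpa using (((hasDerivAt_id u₁).mul_const u₃).div_const _).deriv
  have h6 : deriv (fun t => u₁ * t / (u + 1)) u₃ = u₁ * 1 / (u + 1) := by
    simpa using (((hasDerivAt_id u₃).const_mul u₁).div_const _).deriv
  have h7 : deriv (fun t => u₂ * u₃ / t) u = (0 * u - u₂ * u₃ * 1) / u ^ 2 := by
    simpa using ((hasDerivAt_const u (u₂ * u₃)).div (hasDerivAt_id u) hu).deriv
  have h8 : deriv (fun t => t * u₃ / u) u₂ = 1 * u₃ / u := by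
    simpa using (((hasDerivAt_id u₂).mul_const u₃).div_const _).deriv
  have h9 : deriv (fun t => u₂ * t / u) u₃ = u₂ * 1 / u := by
    simpa using (((hasDerivAt_id u₃).const_mul u₂).div_const _).deriv
  subst hf₁₂ hf₁₃ hf₂₃
  rw [h1, h2, h3] at hD₃f₁₂
  rw [h4, h5, h6] at hD₂f₁₃
  rw [h7, h8, h9] at hD₁f₂₃
  subst hD₃f₁₂ hD₂f₁₃ hD₁f₂₃
  refine ⟨?_, ?_, ?_⟩ <;> field_simp <;> ring
end
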